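/- (L1 distance between occupancy measures of two transition functions, combining Lemmas B.1 and B.2) Let P and P' be two transition functions and π a policy on an episodic loop-free MDP, and for x ∈ X_s (s ≤ L−1) and a ∈ A write ξ(x,a) = Σ_{x'∈X_{s+1}} | P(x'|x,a) − P'(x'|x,a) |. Then Σ_{k=0}^{L−1} Σ_{x∈X_k} Σ_{a∈A} Σ_{x'∈X_{k+1}} | q^{P,π}(x,a,x') − q^{P',π}(x,a,x') | ≤ Σ_{k=0}^{L−1} Σ_{s=0}^{k} Σ_{x∈X_s} Σ_{a∈A} q^{P',π}(x,a)·ξ(x,a) ≤ L·Σ_{s=0}^{L−1} Σ_{x∈X_s} Σ_{a∈A} q^{P',π}(x,a)·ξ(x,a). -/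

import Mathlib

open Finset

/-- An episodic loop-free MDP: layers `X 0, …, X L` (encoded as an `ℕ`-indexed family of
types, so distinct layers are automatically disjoint), with `X 0` and `X L` singletons,
and a finite nonempty action set `A`. -/
structure LoopFreeMDP where
  L : ℕ
  hL : 1 ≤ L
  X : ℕ → Type
  instFintypeX : ∀ k, Fintype (X k)
  instDecEqX : ∀ k, DecidableEq (X k)
  nonemptyX : ∀ k, k ≤ L → Nonempty (X k)
  x0 : X 0
  hX0 : ∀ y : X 0, y = x0
  xL : X L
  hXL : ∀ y : X L, y = xL
  A : Type
  instFintypeA : Fintype A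
  instDecEqA : DecidableEq A
  instNonemptyA : Nonempty A

attribute [instance] LoopFreeMDP.instFintypeX LoopFreeMDP.instDecEqX
  LoopFreeMDP.instFintypeA LoopFreeMDP.instDecEqA LoopFreeMDP.instNonemptyA

namespace LoopFreeMDP

/-- The type of candidate transition functions. -/
abbrev TransKer (M : LoopFreeMDP) := ∀ k, M.X k → M.A → M.X (k + 1) → ℝ

/-- The type of candidate policies. -/
abbrev PolicyKer (M : LoopFreeMDP) := ∀ k, M.X k → M.A → ℝ

/-- `P` is a transition function: for every layer `k < L`, state and action,
`P (·|x,a)` is a probability vector on `X (k+1)`. -/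
def IsTransition (M : LoopFreeMDP) (P : M.TransKer) : Prop :=
  ∀ k, k < M.L → ∀ (x : M.X k) (a : M.A),
    (∀ x', 0 ≤ P k x a x') ∧ (∑ x', P k x a x' = 1)

/-- `π` is a policy: for every layer `k < L` and state, `π (·|x)` is a probability
vector on `A`. -/
def IsPolicy (M : LoopFreeMDP) (π : M.PolicyKer) : Prop :=
  ∀ k, k < M.L → ∀ x : M.X k,
    (∀ a, 0 ≤ π k x a) ∧ (∑ a, π k x a = 1)

/-- The state-visitation probabilities `μ_k`, defined layer by layer. -/
def mu (M : LoopFreeMDP) (P : M.TransKer) (π : M.PolicyKer) : ∀ k, M.X k → ℝ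
  | 0, _ => 1
  | k + 1, x' => ∑ x : M.X k, ∑ a : M.A, M.mu P π k x * π k x a * P k x a x'

/-- The occupancy measure `q^{P,π}(x,a,x') = μ_k(x)·π(a|x)·P(x'|x,a)`. -/
def occ (M : LoopFreeMDP) (P : M.TransKer) (π : M.PolicyKer)
    (k : ℕ) (x : M.X k) (a : M.A) (x' : M.X (k + 1)) : ℝ :=
  M.mu P π k x * π k x a * P k x a x'

end LoopFreeMDP

namespace LoopFreeMDPAux

open LoopFreeMDP

lemma mu_nonneg (M : LoopFreeMDP) (P : M.TransKer) (π : M.PolicyKer)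
    (hP : M.IsTransition P) (hπ : M.IsPolicy π) :
    ∀ k, k ≤ M.L → ∀ x : M.X k, 0 ≤ M.mu P π k x := by
  intro k
  induction k with
  | zero => intro _ x; simp [LoopFreeMDP.mu]
  | succ k ih =>
    intro hk x'
    have hkL : k < M.L := Nat.lt_of_succ_le hk
    rw [LoopFreeMDP.mu]
    apply Finset.sum_nonneg; intro x _
    apply Finset.sum_nonneg; intro a _
    exact mul_nonneg (mul_nonneg (ih hkL.le x) ((hπ k hkL x).1 a)) ((hP k hkL x a).1 x')

lemma step (M : LoopFreeMDP) (P P' : M.TransKer) (π : M.PolicyKer)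
    (hP : M.IsTransition P) (hP' : M.IsTransition P') (hπ : M.IsPolicy π)
    (k : ℕ) (hk : k < M.L) :
    ∑ x : M.X k, ∑ a : M.A, ∑ x' : M.X (k+1),
        |M.occ P π k x a x' - M.occ P' π k x a x'|
      ≤ (∑ x : M.X k, |M.mu P π k x - M.mu P' π k x|) +
        ∑ x : M.X k, ∑ a : M.A, (∑ x' : M.X (k+1), M.occ P' π k x a x') *
          (∑ x' : M.X (k+1), |P k x a x' - P' k x a x'|) := by
  have hmu' := mu_nonneg M P' π hP' hπ k hk.le
  rw [← Finset.sum_add_distrib]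
  apply Finset.sum_le_sum; intro x _
  have key : ∀ a : M.A, ∑ x' : M.X (k+1), |M.occ P π k x a x' - M.occ P' π k x a x'|
      ≤ |M.mu P π k x - M.mu P' π k x| * π k x a +
        (∑ x' : M.X (k+1), M.occ P' π k x a x') *
          (∑ x' : M.X (k+1), |P k x a x' - P' k x a x'|) := by
    intro a
    have hocc' : ∑ x' : M.X (k+1), M.occ P' π k x a x' = M.mu P' π k x * π k x a := by
      simp only [LoopFreeMDP.occ, ← Finset.sum_mul, ← Finset.mul_sum, (hP' k hk x a).2, mul_one]
    rw [hocc']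
    calc ∑ x' : M.X (k+1), |M.occ P π k x a x' - M.occ P' π k x a x'|
        ≤ ∑ x' : M.X (k+1), (|M.mu P π k x - M.mu P' π k x| * π k x a * P k x a x'
            + M.mu P' π k x * π k x a * |P k x a x' - P' k x a x'|) := by
          apply Finset.sum_le_sum; intro x' _
          have hdecomp : M.occ P π k x a x' - M.occ P' π k x a x'
              = (M.mu P π k x - M.mu P' π k x) * π k x a * P k x a x'
                + M.mu P' π k x * π k x a * (P k x a x' - P' k x a x') := by
            simp only [LoopFreeMDP.occ]; ring
          rw [hdecomp]
          refine (abs_add_le _ _).trans (le_of_eq ?_)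
          rw [abs_mul, abs_mul, abs_mul, abs_mul,
            abs_of_nonneg ((hπ k hk x).1 a), abs_of_nonneg ((hP k hk x a).1 x'),
            abs_of_nonneg (hmu' x)]
      _ = |M.mu P π k x - M.mu P' π k x| * π k x a * (∑ x' : M.X (k+1), P k x a x')
            + M.mu P' π k x * π k x a * (∑ x' : M.X (k+1), |P k x a x' - P' k x a x'|) := by
          rw [Finset.sum_add_distrib, ← Finset.mul_sum, ← Finset.mul_sum]
      _ = _ := by rw [(hP k hk x a).2, mul_one]
  calc ∑ a : M.A, ∑ x' : M.X (k+1), |M.occ P π k x a x' - M.occ P' π k x a x'|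
      ≤ ∑ a : M.A, (|M.mu P π k x - M.mu P' π k x| * π k x a +
          (∑ x' : M.X (k+1), M.occ P' π k x a x') *
            (∑ x' : M.X (k+1), |P k x a x' - P' k x a x'|)) :=
        Finset.sum_le_sum fun a _ => key a
    _ = _ := by
        rw [Finset.sum_add_distrib, ← Finset.mul_sum, (hπ k hk x).2, mul_one]

lemma Dstep (M : LoopFreeMDP) (P P' : M.TransKer) (π : M.PolicyKer) (k : ℕ) :
    ∑ x' : M.X (k+1), |M.mu P π (k+1) x' - M.mu P' π (k+1) x'|
      ≤ ∑ x : M.X k, ∑ a : M.A, ∑ x' : M.X (k+1),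
          |M.occ P π k x a x' - M.occ P' π k x a x'| := by
  have h : ∀ x' : M.X (k+1), |M.mu P π (k+1) x' - M.mu P' π (k+1) x'|
      ≤ ∑ x : M.X k, ∑ a : M.A, |M.occ P π k x a x' - M.occ P' π k x a x'| := by
    intro x'
    have hd : M.mu P π (k+1) x' - M.mu P' π (k+1) x'
        = ∑ x : M.X k, ∑ a : M.A, (M.occ P π k x a x' - M.occ P' π k x a x') := by
      simp only [LoopFreeMDP.mu, LoopFreeMDP.occ, ← Finset.sum_sub_distrib]
    rw [hd]
    exact (Finset.abs_sum_le_sum_abs _ _).trans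
      (Finset.sum_le_sum fun x _ => Finset.abs_sum_le_sum_abs _ _)
  calc ∑ x' : M.X (k+1), |M.mu P π (k+1) x' - M.mu P' π (k+1) x'|
      ≤ ∑ x' : M.X (k+1), ∑ x : M.X k, ∑ a : M.A,
          |M.occ P π k x a x' - M.occ P' π k x a x'| := Finset.sum_le_sum fun x' _ => h x'
    _ = _ := by rw [Finset.sum_comm]; exact Finset.sum_congr rfl fun x _ => Finset.sum_comm

lemma Dbound (M : LoopFreeMDP) (P P' : M.TransKer) (π : M.PolicyKer)
    (hP : M.IsTransition P) (hP' : M.IsTransition P') (hπ : M.IsPolicy π) :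
    ∀ k, k ≤ M.L →
    ∑ x : M.X k, |M.mu P π k x - M.mu P' π k x|
      ≤ ∑ s ∈ Finset.range k, ∑ x : M.X s, ∑ a : M.A,
          (∑ x' : M.X (s+1), M.occ P' π s x a x') *
            (∑ x' : M.X (s+1), |P s x a x' - P' s x a x'|) := by
  intro k
  induction k with
  | zero => intro _; simp [LoopFreeMDP.mu]
  | succ k ih =>
    intro hk
    have hkL : k < M.L := Nat.lt_of_succ_le hk
    calc ∑ x : M.X (k+1), |M.mu P π (k+1) x - M.mu P' π (k+1) x|
        ≤ ∑ x : M.X k, ∑ a : M.A, ∑ x' : M.X (k+1),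
            |M.occ P π k x a x' - M.occ P' π k x a x'| := Dstep M P P' π k
      _ ≤ (∑ x : M.X k, |M.mu P π k x - M.mu P' π k x|) +
          ∑ x : M.X k, ∑ a : M.A, (∑ x' : M.X (k+1), M.occ P' π k x a x') *
            (∑ x' : M.X (k+1), |P k x a x' - P' k x a x'|) :=
          step M P P' π hP hP' hπ k hkL
      _ ≤ _ := by
          rw [Finset.sum_range_succ]
          exact add_le_add (ih hkL.le) le_rfl

lemma E_nonneg (M : LoopFreeMDP) (P P' : M.TransKer) (π : M.PolicyKer)
    (hP' : M.IsTransition P') (hπ : M.IsPolicy π) (s : ℕ) (hs : s < M.L) :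
    0 ≤ ∑ x : M.X s, ∑ a : M.A,
        (∑ x' : M.X (s+1), M.occ P' π s x a x') *
          (∑ x' : M.X (s+1), |P s x a x' - P' s x a x'|) := by
  apply Finset.sum_nonneg; intro x _
  apply Finset.sum_nonneg; intro a _
  apply mul_nonneg
  · apply Finset.sum_nonneg; intro x' _
    exact mul_nonneg (mul_nonneg (mu_nonneg M P' π hP' hπ s hs.le x) ((hπ s hs x).1 a))
      ((hP' s hs x a).1 x')
  · exact Finset.sum_nonneg fun x' _ => abs_nonneg _

end LoopFreeMDPAux


/-- **L1 distance between occupancy measures of two transition functions** (combining Lemmas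
B.1 and B.2). With `ξ(x,a) = ‖P(·|x,a) − P'(·|x,a)‖₁`,
`‖q^{P,π} − q^{P',π}‖₁ ≤ Σ_{k<L} Σ_{s≤k} Σ_{x,a} q^{P',π}(x,a)·ξ(x,a)
  ≤ L·Σ_{s<L} Σ_{x,a} q^{P',π}(x,a)·ξ(x,a)`. -/
theorem occupancy_L1_bound (M : LoopFreeMDP)
    (P P' : M.TransKer) (π : M.PolicyKer)
    (hP : M.IsTransition P) (hP' : M.IsTransition P') (hπ : M.IsPolicy π) :
    (∑ k ∈ Finset.range M.L, ∑ x : M.X k, ∑ a : M.A, ∑ x' : M.X (k + 1),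
        |M.occ P π k x a x' - M.occ P' π k x a x'|
      ≤ ∑ k ∈ Finset.range M.L, ∑ s ∈ Finset.range (k + 1), ∑ x : M.X s, ∑ a : M.A,
          (∑ x' : M.X (s + 1), M.occ P' π s x a x') *
            (∑ x' : M.X (s + 1), |P s x a x' - P' s x a x'|)) ∧
    (∑ k ∈ Finset.range M.L, ∑ s ∈ Finset.range (k + 1), ∑ x : M.X s, ∑ a : M.A,
          (∑ x' : M.X (s + 1), M.occ P' π s x a x') *
            (∑ x' : M.X (s + 1), |P s x a x' - P' s x a x'|)
      ≤ (M.L : ℝ) * ∑ s ∈ Finset.range M.L, ∑ x : M.X s, ∑ a : M.A,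
          (∑ x' : M.X (s + 1), M.occ P' π s x a x') *
            (∑ x' : M.X (s + 1), |P s x a x' - P' s x a x'|)) := by
  constructor
  · apply Finset.sum_le_sum; intro k hk
    have hkL : k < M.L := Finset.mem_range.mp hk
    calc ∑ x : M.X k, ∑ a : M.A, ∑ x' : M.X (k+1),
          |M.occ P π k x a x' - M.occ P' π k x a x'|
        ≤ (∑ x : M.X k, |M.mu P π k x - M.mu P' π k x|) +
          ∑ x : M.X k, ∑ a : M.A, (∑ x' : M.X (k+1), M.occ P' π k x a x') *
            (∑ x' : M.X (k+1), |P k x a x' - P' k x a x'|) :=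
          LoopFreeMDPAux.step M P P' π hP hP' hπ k hkL
      _ ≤ (∑ s ∈ Finset.range k, ∑ x : M.X s, ∑ a : M.A,
            (∑ x' : M.X (s+1), M.occ P' π s x a x') *
              (∑ x' : M.X (s+1), |P s x a x' - P' s x a x'|)) +
          ∑ x : M.X k, ∑ a : M.A, (∑ x' : M.X (k+1), M.occ P' π k x a x') *
            (∑ x' : M.X (k+1), |P k x a x' - P' k x a x'|) :=
          add_le_add (LoopFreeMDPAux.Dbound M P P' π hP hP' hπ k hkL.le) le_rfl
      _ = _ := (Finset.sum_range_succ _ k).symm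
  · calc ∑ k ∈ Finset.range M.L, ∑ s ∈ Finset.range (k + 1), ∑ x : M.X s, ∑ a : M.A,
          (∑ x' : M.X (s + 1), M.occ P' π s x a x') *
            (∑ x' : M.X (s + 1), |P s x a x' - P' s x a x'|)
        ≤ ∑ _k ∈ Finset.range M.L, ∑ s ∈ Finset.range M.L, ∑ x : M.X s, ∑ a : M.A,
          (∑ x' : M.X (s + 1), M.occ P' π s x a x') *
            (∑ x' : M.X (s + 1), |P s x a x' - P' s x a x'|) := by
          apply Finset.sum_le_sum; intro k hk
          apply Finset.sum_le_sum_of_subset_of_nonneg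
            (Finset.range_subset_range.mpr (Nat.succ_le_of_lt (Finset.mem_range.mp hk)))
          intro s hs _
          exact LoopFreeMDPAux.E_nonneg M P P' π hP' hπ s (Finset.mem_range.mp hs)
      _ = _ := by rw [Finset.sum_const, Finset.card_range, nsmul_eq_mul]
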